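/- Let (Ω, ℙ) carry the multilabel masking model with l labels and propensities p₁,…,p_l ∈ (0,1]. For i ∈ {1,…,l}, define T*_i := Y*_i / (Σ_{j=1}^l Y*_j) (with the convention that the quotient is 0 when the denominator is 0) and, for y ∈ {0,1}^l, define T_i(y) := (∏_{j ∈ I(y)} 1/p_j) · Σ_{𝒥 ⊆ I(y)} (𝟙[i ∈ 𝒥]/|𝒥|) · ∏_{k ∈ I(y) \ 𝒥} (p_k − 1). Then 𝔼[T_i(Y)] = 𝔼[T*_i]. -/

import Mathlib

open MeasureTheory ProbabilityTheory

/-- The set of positive labels `I(y) = {i : yᵢ = 1}` of a label vector `y ∈ {0,1}^l`. -/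
noncomputable def posSet {l : ℕ} (y : Fin l → ℝ) : Finset (Fin l) :=
  Finset.univ.filter (fun i => y i = 1)

/-- The unbiased estimator `T_i(y)` of the normalized label `T*_i = Y*_i / Σⱼ Y*_j`:
`T_i(y) = (∏_{j ∈ I(y)} 1/pⱼ) · Σ_{𝒥 ⊆ I(y)} (𝟙[i ∈ 𝒥]/|𝒥|) · ∏_{k ∈ I(y) \ 𝒥} (p_k − 1)`. -/
noncomputable def Tps {l : ℕ} (p : Fin l → ℝ) (i : Fin l) (y : Fin l → ℝ) : ℝ :=
  (∏ j ∈ posSet y, (p j)⁻¹) *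
    ∑ J ∈ (posSet y).powerset,
      ((if i ∈ J then (1 : ℝ) else 0) / (J.card : ℝ)) * ∏ k ∈ posSet y \ J, (p k - 1)

section Combinatorics

open Finset

variable {l : ℕ}

lemma aux_zero (p : Fin l → ℝ) (T : Finset (Fin l)) :
    ∑ D ∈ T.powerset, (∏ k ∈ D, (p k - 1)) * ∏ k ∈ T \ D, (1 - p k)
      = if T = ∅ then 1 else 0 := by
  have h := Finset.prod_add (fun k => p k - 1) (fun k => 1 - p k) T
  simp only [show ∀ k, (p k - 1) + (1 - p k) = 0 by intro k; ring] at h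
  rw [← h, Finset.prod_const]
  rcases Finset.eq_empty_or_nonempty T with hT | hT
  · simp [hT]
  · rw [if_neg hT.ne_empty, zero_pow (by simpa [Finset.card_eq_zero] using hT.ne_empty)]

lemma aux_inner (p : Fin l → ℝ) (A J : Finset (Fin l)) (hJ : J ⊆ A) :
    ∑ S ∈ A.powerset.filter (fun S => J ⊆ S),
        (∏ k ∈ A \ S, (1 - p k)) * ∏ k ∈ S \ J, (p k - 1)
      = if J = A then 1 else 0 := by
  classical
  have key : ∑ S ∈ A.powerset.filter (fun S => J ⊆ S),
        (∏ k ∈ A \ S, (1 - p k)) * ∏ k ∈ S \ J, (p k - 1)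
      = ∑ D ∈ (A \ J).powerset, (∏ k ∈ D, (p k - 1)) * ∏ k ∈ (A \ J) \ D, (1 - p k) := by
    refine Finset.sum_nbij' (i := fun S => S \ J) (j := fun D => J ∪ D) ?_ ?_ ?_ ?_ ?_
    · intro S hS
      simp only [mem_filter, mem_powerset] at hS
      exact mem_powerset.2 (sdiff_subset_sdiff hS.1 le_rfl)
    · intro D hD
      simp only [mem_powerset] at hD
      simp only [mem_filter, mem_powerset]
      exact ⟨union_subset hJ (hD.trans sdiff_subset), subset_union_left⟩
    · intro S hS
      simp only [mem_filter, mem_powerset] at hS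
      exact union_sdiff_of_subset hS.2
    · intro D hD
      simp only [mem_powerset] at hD
      ext k
      simp only [mem_sdiff, mem_union]
      constructor
      · rintro ⟨h1 | h1, h2⟩
        · exact absurd h1 h2
        · exact h1
      · intro hk
        exact ⟨Or.inr hk, fun hkJ => (mem_sdiff.1 (hD hk)).2 hkJ⟩
    · intro S hS
      simp only [mem_filter, mem_powerset] at hS
      have : A \ S = (A \ J) \ (S \ J) := by
        ext k
        simp only [mem_sdiff]
        constructor
        · intro ⟨h1, h2⟩
          exact ⟨⟨h1, fun hk => h2 (hS.2 hk)⟩, fun hk => h2 hk.1⟩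
        · intro ⟨⟨h1, h2⟩, h3⟩
          refine ⟨h1, fun hk => h3 ⟨hk, h2⟩⟩
      rw [this]; ring
  rw [key, aux_zero]
  by_cases h : J = A
  · simp [h]
  · rw [if_neg, if_neg h]
    rw [sdiff_eq_empty_iff_subset]
    exact fun hAJ => h (le_antisymm hJ hAJ)

lemma aux_mid (p : Fin l → ℝ) (i : Fin l) (A : Finset (Fin l)) :
    ∑ S ∈ A.powerset, (∏ k ∈ A \ S, (1 - p k)) *
        ∑ J ∈ S.powerset, ((if i ∈ J then (1:ℝ) else 0) / (J.card : ℝ)) * ∏ k ∈ S \ J, (p k - 1)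
      = (if i ∈ A then (1:ℝ) else 0) / (A.card : ℝ) := by
  classical
  have swap : ∑ S ∈ A.powerset, ∑ J ∈ S.powerset,
        (∏ k ∈ A \ S, (1 - p k)) * (((if i ∈ J then (1:ℝ) else 0) / (J.card : ℝ)) *
          ∏ k ∈ S \ J, (p k - 1))
      = ∑ J ∈ A.powerset, ∑ S ∈ A.powerset.filter (fun S => J ⊆ S),
        (∏ k ∈ A \ S, (1 - p k)) * (((if i ∈ J then (1:ℝ) else 0) / (J.card : ℝ)) *
          ∏ k ∈ S \ J, (p k - 1)) := by
    refine Finset.sum_comm' ?_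
    intro S J
    simp only [mem_powerset, mem_filter]
    constructor
    · exact fun ⟨h1, h2⟩ => ⟨⟨h1, h2⟩, h2.trans h1⟩
    · exact fun ⟨⟨h1, h2⟩, h3⟩ => ⟨h1, h2⟩
  calc ∑ S ∈ A.powerset, (∏ k ∈ A \ S, (1 - p k)) *
        ∑ J ∈ S.powerset, ((if i ∈ J then (1:ℝ) else 0) / (J.card : ℝ)) * ∏ k ∈ S \ J, (p k - 1)
      = ∑ S ∈ A.powerset, ∑ J ∈ S.powerset,
        (∏ k ∈ A \ S, (1 - p k)) * (((if i ∈ J then (1:ℝ) else 0) / (J.card : ℝ)) *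
          ∏ k ∈ S \ J, (p k - 1)) := by
        simp_rw [Finset.mul_sum]
    _ = ∑ J ∈ A.powerset, ∑ S ∈ A.powerset.filter (fun S => J ⊆ S),
        (∏ k ∈ A \ S, (1 - p k)) * (((if i ∈ J then (1:ℝ) else 0) / (J.card : ℝ)) *
          ∏ k ∈ S \ J, (p k - 1)) := swap
    _ = ∑ J ∈ A.powerset, ((if i ∈ J then (1:ℝ) else 0) / (J.card : ℝ)) *
          (if J = A then 1 else 0) := by
        refine Finset.sum_congr rfl fun J hJ => ?_
        rw [← aux_inner p A J (mem_powerset.1 hJ), Finset.mul_sum]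
        refine Finset.sum_congr rfl fun S hS => ?_
        ring
    _ = (if i ∈ A then (1:ℝ) else 0) / (A.card : ℝ) := by
        rw [Finset.sum_eq_single_of_mem A (mem_powerset.2 le_rfl)]
        · simp
        · intro J _ hJA
          simp [hJA]

/-- The value `Tps` as a function of the positive set. -/
noncomputable def gfun (p : Fin l → ℝ) (i : Fin l) (S : Finset (Fin l)) : ℝ :=
  (∏ j ∈ S, (p j)⁻¹) *
    ∑ J ∈ S.powerset, ((if i ∈ J then (1 : ℝ) else 0) / (J.card : ℝ)) * ∏ k ∈ S \ J, (p k - 1)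

lemma aux_fiber (p : Fin l → ℝ) (A S : Finset (Fin l)) (hS : S ⊆ A) :
    ∑ B ∈ (univ : Finset (Fin l)).powerset.filter (fun B => A ∩ B = S),
        (∏ k ∈ B, p k) * ∏ k ∈ univ \ B, (1 - p k)
      = (∏ k ∈ S, p k) * ∏ k ∈ A \ S, (1 - p k) := by
  classical
  have key : ∑ B ∈ (univ : Finset (Fin l)).powerset.filter (fun B => A ∩ B = S),
        (∏ k ∈ B, p k) * ∏ k ∈ univ \ B, (1 - p k)
      = ∑ C ∈ (univ \ A).powerset,
        ((∏ k ∈ S, p k) * ∏ k ∈ A \ S, (1 - p k)) *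
          ((∏ k ∈ C, p k) * ∏ k ∈ (univ \ A) \ C, (1 - p k)) := by
    refine Finset.sum_nbij' (i := fun B => B \ A) (j := fun C => S ∪ C) ?_ ?_ ?_ ?_ ?_
    · intro B hB
      exact mem_powerset.2 (sdiff_subset_sdiff (subset_univ B) le_rfl)
    · intro C hC
      simp only [mem_powerset] at hC
      simp only [mem_filter, mem_powerset]
      refine ⟨subset_univ _, ?_⟩
      ext k
      simp only [mem_inter, mem_union]
      constructor
      · rintro ⟨hkA, hkS | hkC⟩
        · exact hkS
        · exact absurd hkA (mem_sdiff.1 (hC hkC)).2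
      · intro hk; exact ⟨hS hk, Or.inl hk⟩
    · intro B hB
      simp only [mem_filter, mem_powerset] at hB
      ext k
      simp only [mem_union, mem_sdiff]
      constructor
      · rintro (hk | hk)
        · exact (mem_inter.1 (hB.2 ▸ hk : k ∈ A ∩ B)).2
        · exact hk.1
      · intro hk
        by_cases hkA : k ∈ A
        · exact Or.inl (hB.2 ▸ mem_inter.2 ⟨hkA, hk⟩)
        · exact Or.inr ⟨hk, hkA⟩
    · intro C hC
      simp only [mem_powerset] at hC
      ext k
      simp only [mem_sdiff, mem_union]
      constructor
      · rintro ⟨hkS | hkC, hkA⟩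
        · exact absurd (hS hkS) hkA
        · exact hkC
      · intro hk; exact ⟨Or.inr hk, (mem_sdiff.1 (hC hk)).2⟩
    · intro B hB
      simp only [mem_filter, mem_powerset] at hB
      have hmem : ∀ k, k ∈ S ↔ k ∈ A ∧ k ∈ B := fun k => by rw [← hB.2, mem_inter]
      have hBeq : B = S ∪ (B \ A) := by
        ext k
        have := hmem k
        simp only [mem_union, mem_sdiff]
        tauto
      have hdisj1 : Disjoint S (B \ A) :=
        disjoint_sdiff.mono_left hS
      have huniv : univ \ B = (A \ S) ∪ ((univ \ A) \ (B \ A)) := by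
        ext k
        have := hmem k
        simp only [mem_sdiff, mem_union, mem_univ, true_and]
        tauto
      have hdisj2 : Disjoint (A \ S) ((univ \ A) \ (B \ A)) := by
        rw [Finset.disjoint_left]
        intro k hk1 hk2
        exact (mem_sdiff.1 (mem_sdiff.1 hk2).1).2 (mem_sdiff.1 hk1).1
      rw [huniv, Finset.prod_union hdisj2]
      have hpB : (∏ k ∈ B, p k) = (∏ k ∈ S, p k) * ∏ k ∈ B \ A, p k := by
        conv_lhs => rw [hBeq]
        exact Finset.prod_union hdisj1
      rw [hpB]; ring
  rw [key, ← Finset.mul_sum]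
  have : ∑ C ∈ (univ \ A).powerset, (∏ k ∈ C, p k) * ∏ k ∈ (univ \ A) \ C, (1 - p k) = 1 := by
    rw [← Finset.prod_add p (fun k => 1 - p k) (univ \ A)]
    simp
  rw [this, mul_one]

lemma key_identity (p : Fin l → ℝ) (hp : ∀ k, p k ≠ 0) (i : Fin l) (A : Finset (Fin l)) :
    ∑ B ∈ (univ : Finset (Fin l)).powerset,
        ((∏ k ∈ B, p k) * ∏ k ∈ univ \ B, (1 - p k)) * gfun p i (A ∩ B)
      = (if i ∈ A then (1:ℝ) else 0) / (A.card : ℝ) := by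
  classical
  rw [← Finset.sum_fiberwise_of_maps_to (g := fun B => A ∩ B) (t := A.powerset)
    (fun B _ => mem_powerset.2 inter_subset_left)]
  have step : ∀ S ∈ A.powerset,
      ∑ B ∈ (univ : Finset (Fin l)).powerset.filter (fun B => A ∩ B = S),
        ((∏ k ∈ B, p k) * ∏ k ∈ univ \ B, (1 - p k)) * gfun p i (A ∩ B)
      = (∏ k ∈ A \ S, (1 - p k)) *
          ∑ J ∈ S.powerset, ((if i ∈ J then (1:ℝ) else 0) / (J.card : ℝ)) *
            ∏ k ∈ S \ J, (p k - 1) := by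
    intro S hS
    have : ∑ B ∈ (univ : Finset (Fin l)).powerset.filter (fun B => A ∩ B = S),
        ((∏ k ∈ B, p k) * ∏ k ∈ univ \ B, (1 - p k)) * gfun p i (A ∩ B)
      = (∑ B ∈ (univ : Finset (Fin l)).powerset.filter (fun B => A ∩ B = S),
          (∏ k ∈ B, p k) * ∏ k ∈ univ \ B, (1 - p k)) * gfun p i S := by
      rw [Finset.sum_mul]
      refine Finset.sum_congr rfl fun B hB => ?_
      rw [(Finset.mem_filter.1 hB).2]
    rw [this, aux_fiber p A S (mem_powerset.1 hS), gfun]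
    have hinv : (∏ k ∈ S, p k) * ∏ j ∈ S, (p j)⁻¹ = 1 := by
      rw [← Finset.prod_mul_distrib]
      exact Finset.prod_eq_one fun k _ => mul_inv_cancel₀ (hp k)
    calc ((∏ k ∈ S, p k) * ∏ k ∈ A \ S, (1 - p k)) *
          ((∏ j ∈ S, (p j)⁻¹) *
            ∑ J ∈ S.powerset, ((if i ∈ J then (1:ℝ) else 0) / (J.card : ℝ)) *
              ∏ k ∈ S \ J, (p k - 1))
        = ((∏ k ∈ S, p k) * ∏ j ∈ S, (p j)⁻¹) * ((∏ k ∈ A \ S, (1 - p k)) *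
            ∑ J ∈ S.powerset, ((if i ∈ J then (1:ℝ) else 0) / (J.card : ℝ)) *
              ∏ k ∈ S \ J, (p k - 1)) := by ring
      _ = _ := by rw [hinv, one_mul]
  rw [Finset.sum_congr rfl step]
  exact aux_mid p i A

lemma sum_bool (p : Fin l → ℝ) (f : Finset (Fin l) → ℝ) :
    ∑ b : Fin l → Bool, (∏ k, (if b k then p k else 1 - p k)) *
        f (univ.filter fun k => b k = true)
      = ∑ B ∈ (univ : Finset (Fin l)).powerset,
          ((∏ k ∈ B, p k) * ∏ k ∈ univ \ B, (1 - p k)) * f B := by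
  classical
  refine Finset.sum_nbij' (i := fun b => univ.filter fun k => b k = true)
    (j := fun B => fun k => decide (k ∈ B)) (fun b _ => mem_powerset.2 (subset_univ _))
    (fun B _ => mem_univ _) ?_ ?_ ?_
  · intro b _
    funext k
    simp
  · intro B _
    ext k
    simp
  · intro b _
    congr 1
    rw [Finset.prod_ite p (fun k => 1 - p k), Finset.filter_not]

lemma posSet_prod (a b : Fin l → Bool) :
    (univ.filter fun j => ((if b j then (1:ℝ) else 0) * (if a j then (1:ℝ) else 0)) = 1)
      = (univ.filter fun j => a j = true) ∩ (univ.filter fun j => b j = true) := by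
  ext k
  simp only [mem_filter, mem_inter, mem_univ, true_and]
  rcases Bool.eq_false_or_eq_true (a k) with h1 | h1 <;>
    rcases Bool.eq_false_or_eq_true (b k) with h2 | h2 <;> simp [h1, h2]

/-- The `{0,1}`-valued real vector associated to a Boolean vector. -/
noncomputable def vB {l : ℕ} (a : Fin l → Bool) : Fin l → ℝ := fun j => if a j then 1 else 0

lemma per_a (p : Fin l → ℝ) (hp : ∀ k, p k ≠ 0) (i : Fin l) (a : Fin l → Bool) :
    ∑ b : Fin l → Bool, (∏ k, (if b k then p k else 1 - p k)) *
        Tps p i (fun j => vB b j * vB a j)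
      = vB a i / (∑ j, vB a j) := by
  classical
  simp only [vB]
  set A : Finset (Fin l) := univ.filter fun j => a j = true with hA
  have h1 : ∀ b : Fin l → Bool,
      Tps p i (fun j => (if b j then (1:ℝ) else 0) * (if a j then (1:ℝ) else 0))
        = gfun p i (A ∩ (univ.filter fun k => b k = true)) := by
    intro b
    show gfun p i (posSet _) = _
    rw [posSet, posSet_prod]
  simp_rw [h1]
  rw [sum_bool p (fun B => gfun p i (A ∩ B)), key_identity p hp i A]
  congr 1
  · simp [hA]
  · rw [Finset.sum_boole, hA]

end Combinatorics

theorem unbiased_normalized_label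
    {Ω : Type*} [MeasurableSpace Ω] (P : Measure Ω) [IsProbabilityMeasure P]
    {𝒳 : Type*} [MeasurableSpace 𝒳]
    (l : ℕ) (X : Ω → 𝒳) (Ystar M : Ω → Fin l → ℝ)
    (hX : Measurable X) (hYstar : Measurable Ystar) (hM : Measurable M)
    (hYstar01 : ∀ ω i, Ystar ω i = 0 ∨ Ystar ω i = 1)
    (hM01 : ∀ ω i, M ω i = 0 ∨ M ω i = 1)
    (p : Fin l → ℝ) (hp : ∀ i, p i ∈ Set.Ioc (0 : ℝ) 1)
    (hMindep : iIndepFun (m := fun _ : Fin l => (inferInstance : MeasurableSpace ℝ))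
      (fun i ω => M ω i) P)
    (hindep : IndepFun (fun ω => (X ω, Ystar ω)) M P)
    (hMp : ∀ i, P {ω | M ω i = 1} = ENNReal.ofReal (p i))
    (i : Fin l) :
    ∫ ω, Tps p i (fun j => M ω j * Ystar ω j) ∂P
      = ∫ ω, Ystar ω i / ∑ j, Ystar ω j ∂P := by
  classical
  have hwnn : ∀ b : Fin l → Bool, 0 ≤ ∏ k, (if b k then p k else 1 - p k) :=
    fun b => Finset.prod_nonneg fun k _ => by
      split_ifs
      · exact (hp k).1.le
      · linarith [(hp k).2]
  set EY : (Fin l → Bool) → Set Ω := fun a => {ω | Ystar ω = vB a} with hEY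
  set EM : (Fin l → Bool) → Set Ω := fun b => {ω | M ω = vB b} with hEM
  have hEYmeas : ∀ a, MeasurableSet (EY a) := fun a => hYstar (measurableSet_singleton (vB a))
  have hEMmeas : ∀ b, MeasurableSet (EM b) := fun b => hM (measurableSet_singleton (vB b))
  have hIndepYM : IndepFun Ystar M P := hindep.comp measurable_snd measurable_id
  -- canonical classification
  have hself : ∀ (v : Fin l → ℝ), (∀ j, v j = 0 ∨ v j = 1) →
      v = vB (fun j => decide (v j = 1)) := by
    intro v hv; funext j
    rcases hv j with h | h <;> simp [vB, h]
  have huniq : ∀ (v : Fin l → ℝ) (a : Fin l → Bool), (∀ j, v j = 0 ∨ v j = 1) →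
      v = vB a → a = fun j => decide (v j = 1) := by
    intro v a hv hva; funext j
    cases haj : a j
    · have h0 : v j = 0 := by rw [hva]; simp [vB, haj]
      simp [h0]
    · have h1 : v j = 1 := by rw [hva]; simp [vB, haj]
      simp [h1]
  -- decompose the integrands
  have hdecompL : (fun ω => Tps p i (fun j => M ω j * Ystar ω j))
      = fun ω => ∑ ab : (Fin l → Bool) × (Fin l → Bool),
          if Ystar ω = vB ab.1 ∧ M ω = vB ab.2
          then Tps p i (fun j => vB ab.2 j * vB ab.1 j) else 0 := by
    funext ω
    have hY0 : Ystar ω = vB (fun j => decide (Ystar ω j = 1)) := hself _ (hYstar01 ω)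
    have hM0 : M ω = vB (fun j => decide (M ω j = 1)) := hself _ (hM01 ω)
    rw [Finset.sum_eq_single_of_mem
      ((fun j => decide (Ystar ω j = 1)), (fun j => decide (M ω j = 1))) (Finset.mem_univ _)]
    · rw [if_pos ⟨hY0, hM0⟩]
      have harg : (fun j => M ω j * Ystar ω j)
          = fun j => vB (fun j' => decide (M ω j' = 1)) j *
              vB (fun j' => decide (Ystar ω j' = 1)) j := by
        funext j
        rw [congrFun hY0 j, congrFun hM0 j]
      exact congrArg (Tps p i) harg
    · intro ab _ hne
      rw [if_neg]
      rintro ⟨h1, h2⟩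
      exact hne (Prod.ext (huniq _ _ (hYstar01 ω) h1) (huniq _ _ (hM01 ω) h2))
  have hdecompR : (fun ω => Ystar ω i / ∑ j, Ystar ω j)
      = fun ω => ∑ a : Fin l → Bool,
          if Ystar ω = vB a then (vB a i / ∑ j, vB a j) else 0 := by
    funext ω
    have hY0 : Ystar ω = vB (fun j => decide (Ystar ω j = 1)) := hself _ (hYstar01 ω)
    rw [Finset.sum_eq_single_of_mem (fun j => decide (Ystar ω j = 1)) (Finset.mem_univ _)]
    · rw [if_pos hY0, ← hY0]
    · intro a _ hne
      rw [if_neg]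
      intro h1
      exact hne (huniq _ _ (hYstar01 ω) h1)
  -- compute the integrals as finite sums
  have hindL : ∀ (a b : Fin l → Bool) (c : ℝ),
      (fun ω => if Ystar ω = vB a ∧ M ω = vB b then c else 0)
        = (EY a ∩ EM b).indicator (fun _ => c) := by
    intro a b c
    funext ω
    by_cases h : Ystar ω = vB a ∧ M ω = vB b
    · rw [if_pos h, Set.indicator_of_mem (show ω ∈ EY a ∩ EM b from ⟨h.1, h.2⟩)]
    · rw [if_neg h,
        Set.indicator_of_notMem (show ω ∉ EY a ∩ EM b from fun hm => h ⟨hm.1, hm.2⟩)]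
  have hLHS : ∫ ω, Tps p i (fun j => M ω j * Ystar ω j) ∂P
      = ∑ ab : (Fin l → Bool) × (Fin l → Bool),
          (P (EY ab.1 ∩ EM ab.2)).toReal * Tps p i (fun j => vB ab.2 j * vB ab.1 j) := by
    rw [hdecompL, integral_finset_sum]
    · refine Finset.sum_congr rfl fun ab _ => ?_
      rw [hindL ab.1 ab.2 _,
        integral_indicator_const _ ((hEYmeas ab.1).inter (hEMmeas ab.2)), smul_eq_mul, measureReal_def]
    · intro ab _
      rw [hindL ab.1 ab.2 _]
      exact (integrable_const _).indicator ((hEYmeas ab.1).inter (hEMmeas ab.2))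
  have hRHS : ∫ ω, Ystar ω i / ∑ j, Ystar ω j ∂P
      = ∑ a : Fin l → Bool, (P (EY a)).toReal * (vB a i / ∑ j, vB a j) := by
    have hindR : ∀ (a : Fin l → Bool),
        (fun ω => if Ystar ω = vB a then (vB a i / ∑ j, vB a j) else 0)
          = (EY a).indicator (fun _ => vB a i / ∑ j, vB a j) := by
      intro a
      funext ω
      by_cases h : Ystar ω = vB a
      · rw [if_pos h, Set.indicator_of_mem (show ω ∈ EY a from h)]
      · rw [if_neg h, Set.indicator_of_notMem (show ω ∉ EY a from h)]
    rw [hdecompR, integral_finset_sum]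
    · refine Finset.sum_congr rfl fun a _ => ?_
      rw [hindR a, integral_indicator_const _ (hEYmeas a), smul_eq_mul, measureReal_def]
    · intro a _
      rw [hindR a]
      exact (integrable_const _).indicator (hEYmeas a)
  -- measure computations
  have hprod : ∀ a b, P (EY a ∩ EM b) = P (EY a) * P (EM b) := fun a b =>
    hIndepYM.measure_inter_preimage_eq_mul {vB a} {vB b}
      (measurableSet_singleton _) (measurableSet_singleton _)
  have hMj : ∀ (b : Fin l → Bool) (j : Fin l),
      P {ω | M ω j = vB b j} = ENNReal.ofReal (if b j then p j else 1 - p j) := by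
    intro b j
    cases hbj : b j
    · have h0 : {ω | M ω j = vB b j} = {ω | M ω j = 1}ᶜ := by
        ext ω
        simp only [vB, hbj, Bool.false_eq_true, if_false, Set.mem_setOf_eq, Set.mem_compl_iff]
        rcases hM01 ω j with h' | h' <;> simp [h']
      have hm1 : MeasurableSet {ω | M ω j = 1} :=
        ((measurable_pi_apply j).comp hM) (measurableSet_singleton 1)
      rw [h0, measure_compl hm1 (measure_ne_top _ _), measure_univ, hMp j,
        if_neg Bool.false_ne_true, ← ENNReal.ofReal_one,
        ← ENNReal.ofReal_sub 1 (hp j).1.le]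
    · have h1 : {ω | M ω j = vB b j} = {ω | M ω j = 1} := by
        simp only [vB, hbj, if_true]
      rw [h1, hMp j]
      simp
  have hEMval : ∀ b, P (EM b) = ENNReal.ofReal (∏ k, if b k then p k else 1 - p k) := by
    intro b
    have hEMi : EM b = ⋂ j, {ω | M ω j = vB b j} := by
      ext ω
      simp only [hEM, Set.mem_setOf_eq, Set.mem_iInter, funext_iff]
    have hmi := hMindep.meas_iInter (s := fun j => {ω | M ω j = vB b j})
      (fun j => ⟨{vB b j}, measurableSet_singleton _, rfl⟩)
    rw [hEMi, hmi, Finset.prod_congr rfl (fun j _ => hMj b j),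
      ← ENNReal.ofReal_prod_of_nonneg]
    intro k _
    split_ifs
    · exact (hp k).1.le
    · linarith [(hp k).2]
  -- assemble
  rw [hLHS, hRHS, Fintype.sum_prod_type]
  refine Finset.sum_congr rfl fun a _ => ?_
  calc ∑ b : Fin l → Bool,
        (P (EY a ∩ EM b)).toReal * Tps p i (fun j => vB b j * vB a j)
      = (P (EY a)).toReal * ∑ b : Fin l → Bool,
          (∏ k, if b k then p k else 1 - p k) * Tps p i (fun j => vB b j * vB a j) := by
        rw [Finset.mul_sum]
        refine Finset.sum_congr rfl fun b _ => ?_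
        rw [hprod a b, hEMval b, ENNReal.toReal_mul, ENNReal.toReal_ofReal (hwnn b)]
        ring
    _ = (P (EY a)).toReal * (vB a i / ∑ j, vB a j) := by
        rw [per_a p (fun k => (hp k).1.ne') i a]
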